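/- Let A be a real N×d matrix (whose rows are the training inputs), Y a real N×d matrix (whose rows are the training targets), and ι : Fin m → Fin d an injective map selecting the columns belonging to one subgrid; write B = A.submatrix id ι for the N×m matrix of selected input columns and Y_ι = Y.submatrix id ι for the selected target columns. Assume rank(A) = rank(B). Then for every d×d matrix W minimizing the squared loss ∑_{i,j} ((A·W − Y) i j)² over all d×d real matrices, and every m×m matrix V minimizing ∑_{i,j} ((B·V − Y_ι) i j)² over all m×m real matrices, the predictions on the selected components coincide: (A·W).submatrix id ι = B·V. -/

import Mathlib

open scoped BigOperators
open Matrix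

lemma quad_zero {a b : ℝ} (hb : 0 ≤ b) (h : ∀ t : ℝ, 0 ≤ 2*a*t + b*t^2) : a = 0 := by
  have h1 := h (-a/(b+1))
  have hb1 : (0:ℝ) < b + 1 := by linarith
  have hne : (b+1) ≠ 0 := ne_of_gt hb1
  have h3 : 0 ≤ (2*a*(-a/(b+1)) + b*(-a/(b+1))^2) * (b+1)^2 :=
    mul_nonneg h1 (by positivity)
  have h4 : (2*a*(-a/(b+1)) + b*(-a/(b+1))^2) * (b+1)^2 = -2*a^2*(b+1) + b*a^2 := by
    field_simp
  rw [h4] at h3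
  nlinarith [sq_nonneg a]

lemma normal_eq {N p q : ℕ} (X : Matrix (Fin N) (Fin p) ℝ) (Y : Matrix (Fin N) (Fin q) ℝ)
    (W : Matrix (Fin p) (Fin q) ℝ)
    (hW : ∀ W' : Matrix (Fin p) (Fin q) ℝ, ∑ i, ∑ j, ((X * W - Y) i j)^2 ≤ ∑ i, ∑ j, ((X * W' - Y) i j)^2) :
    Xᵀ * (X * W - Y) = 0 := by
  ext k l
  set R := X * W - Y with hR
  set S : Matrix (Fin N) (Fin q) ℝ := fun i j => X i k * (if j = l then 1 else 0) with hS
  have key : ∀ t : ℝ, 0 ≤ 2 * (∑ i, ∑ j, R i j * S i j) * t + (∑ i, ∑ j, (S i j)^2) * t^2 := by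
    intro t
    have h1 := hW (W + t • Matrix.single k l 1)
    have hexp : X * (W + t • Matrix.single k l 1) - Y = R + t • S := by
      ext i j
      simp only [hR, hS, Matrix.mul_apply, Matrix.add_apply, Matrix.sub_apply, Matrix.smul_apply,
        Matrix.single, Matrix.of_apply, smul_eq_mul, mul_add, Finset.sum_add_distrib,
        mul_ite, mul_one, mul_zero]
      have hsum : ∑ x, (if k = x ∧ l = j then X i x * t else 0)
           = (if j = l then t * X i k else 0) := by
        rw [Finset.sum_eq_single k]
        · by_cases hl : l = j <;> simp [hl, eq_comm, mul_comm]
        · intro b _ hb; simp [Ne.symm hb]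
        · simp
      rw [hsum]
      by_cases hl : l = j <;> simp [hl, eq_comm] <;> erw [Matrix.smul_apply] <;> simp [hl, eq_comm] <;> ring
    rw [hexp] at h1
    have h2 : ∑ i, ∑ j, ((R + t • S) i j)^2
        = (∑ i, ∑ j, (R i j)^2) + (2 * (∑ i, ∑ j, R i j * S i j) * t
          + (∑ i, ∑ j, (S i j)^2) * t^2) := by
      have : ∀ i, ∑ j, ((R + t • S) i j)^2
          = ∑ j, ((R i j)^2 + (2 * (R i j * S i j) * t + (S i j)^2 * t^2)) := by
        intro i
        refine Finset.sum_congr rfl fun j _ => ?_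
        simp only [Matrix.add_apply, Matrix.smul_apply, smul_eq_mul]
        ring
      simp only [this, Finset.sum_add_distrib, Finset.mul_sum, Finset.sum_mul]
    rw [h2] at h1
    linarith
  have hSnn : 0 ≤ ∑ i, ∑ j, (S i j)^2 :=
    Finset.sum_nonneg fun i _ => Finset.sum_nonneg fun j _ => sq_nonneg _
  have hz := quad_zero hSnn key
  have hc : ∑ i, ∑ j, R i j * S i j = ∑ i, X i k * R i l := by
    refine Finset.sum_congr rfl fun i _ => ?_
    simp only [hS]
    rw [Finset.sum_eq_single l] <;> simp +contextual [eq_comm, mul_comm]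
  rw [hc] at hz
  simpa [Matrix.mul_apply, Matrix.transpose_apply] using hz


/-- **Proposition 3.1 (information loss under spatial decomposition).**
Let `A` be the `N × d` matrix of training inputs, `Y` the `N × d` matrix of training targets,
and `ι : Fin m → Fin d` an injective selection of the columns belonging to one subgrid, with
`B = A.submatrix id ι`.  If `rank A = rank B`, then every least-squares solution `W` of the
full problem and every least-squares solution `V` of the decomposed problem make the same
predictions on the selected components: `(A * W).submatrix id ι = B * V`. -/
theorem spatial_decomposition_same_prediction {N d m : ℕ}
    (A Y : Matrix (Fin N) (Fin d) ℝ) (ι : Fin m → Fin d) (hι : Function.Injective ι)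
    (hrank : A.rank = (A.submatrix id ι).rank)
    (W : Matrix (Fin d) (Fin d) ℝ)
    (hW : ∀ W' : Matrix (Fin d) (Fin d) ℝ,
      ∑ i, ∑ j, ((A * W - Y) i j) ^ 2 ≤ ∑ i, ∑ j, ((A * W' - Y) i j) ^ 2)
    (V : Matrix (Fin m) (Fin m) ℝ)
    (hV : ∀ V' : Matrix (Fin m) (Fin m) ℝ,
      ∑ i, ∑ j, ((A.submatrix id ι * V - Y.submatrix id ι) i j) ^ 2 ≤
        ∑ i, ∑ j, ((A.submatrix id ι * V' - Y.submatrix id ι) i j) ^ 2) :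
    (A * W).submatrix id ι = A.submatrix id ι * V := by
  set B : Matrix (Fin N) (Fin m) ℝ := A.submatrix id ι with hB
  -- column space of B is contained in column space of A
  have hsub : LinearMap.range B.mulVecLin ≤ LinearMap.range A.mulVecLin := by
    rintro _ ⟨x, rfl⟩
    refine ⟨fun j => ∑ i, if ι i = j then x i else 0, ?_⟩
    ext n
    simp only [Matrix.mulVecLin_apply, Matrix.mulVec, dotProduct, Finset.mul_sum, mul_ite,
      mul_zero]
    rw [Finset.sum_comm]
    refine Finset.sum_congr rfl fun i _ => ?_
    rw [Finset.sum_ite_eq Finset.univ (ι i) (fun j => A n j * x i)]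
    simp [hB, Matrix.submatrix_apply]
  have heq : LinearMap.range B.mulVecLin = LinearMap.range A.mulVecLin :=
    Submodule.eq_of_le_of_finrank_eq hsub (by rw [← Matrix.rank, ← Matrix.rank, hrank])
  -- every column of A is in the column space of B : A = B * C
  have hcol : ∀ j : Fin d, ∃ c : Fin m → ℝ, B.mulVec c = fun i => A i j := by
    intro j
    have : (fun i => A i j) ∈ LinearMap.range A.mulVecLin := by
      refine ⟨Pi.single j 1, ?_⟩
      ext i
      simp [Matrix.mulVecLin_apply, Matrix.mulVec, dotProduct, Pi.single_apply, mul_ite]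
    rw [← heq] at this
    obtain ⟨c, hc⟩ := this
    exact ⟨c, hc⟩
  choose c hc using hcol
  set C : Matrix (Fin m) (Fin d) ℝ := fun k j => c j k with hCdef
  have hA : A = B * C := by
    ext i j
    have := congrFun (hc j) i
    rw [Matrix.mul_apply]
    simpa [Matrix.mulVec, dotProduct, hCdef] using this.symm
  -- normal equations
  have hNW : Aᵀ * (A * W - Y) = 0 := normal_eq A Y W (by simpa using hW)
  have hNV : Bᵀ * (B * V - Y.submatrix id ι) = 0 := normal_eq B (Y.submatrix id ι) V (by simpa using hV)
  -- Bᵀ annihilates residual of full solution restricted to ι columns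
  have h1 : Bᵀ * ((A * W).submatrix id ι - Y.submatrix id ι) = 0 := by
    ext k l
    have h0 : (Aᵀ * (A * W - Y)) (ι k) (ι l) = 0 := by rw [hNW]; rfl
    simp only [Matrix.mul_apply, Matrix.sub_apply, Matrix.transpose_apply,
      Matrix.submatrix_apply, Matrix.zero_apply, id_eq] at h0 ⊢
    exact h0
  set D : Matrix (Fin N) (Fin m) ℝ := (A * W).submatrix id ι - B * V with hDdef
  have hD : Bᵀ * D = 0 := by
    have hsplit : D = ((A * W).submatrix id ι - Y.submatrix id ι)
        - (B * V - Y.submatrix id ι) := by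
      rw [hDdef]; abel
    rw [hsplit, Matrix.mul_sub, h1, hNV, sub_zero]
  -- D lies in the column space of B
  have hBZ : (A * W).submatrix id ι = B * ((C * W).submatrix id ι) := by
    have hAW : A * W = B * (C * W) := by rw [hA, Matrix.mul_assoc]
    rw [hAW]
    ext i l
    simp [Matrix.mul_apply, Matrix.submatrix_apply]
  set Z : Matrix (Fin m) (Fin m) ℝ := (C * W).submatrix id ι - V with hZdef
  have hDZ : D = B * Z := by rw [hDdef, hZdef, Matrix.mul_sub, ← hBZ]
  have hDtD : Dᵀ * D = 0 := by
    rw [hDZ, Matrix.transpose_mul, Matrix.mul_assoc, ← hDZ, hD, Matrix.mul_zero]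
  -- conclude D = 0
  have hDzero : D = 0 := by
    ext i l
    have hdiag : (Dᵀ * D) l l = 0 := by rw [hDtD]; rfl
    simp only [Matrix.mul_apply, Matrix.transpose_apply] at hdiag
    have := (Finset.sum_eq_zero_iff_of_nonneg
      (fun i _ => mul_self_nonneg (D i l))).mp hdiag i (Finset.mem_univ i)
    have := mul_self_eq_zero.mp this
    simpa using this
  have := sub_eq_zero.mp hDzero
  rw [hB] at this
  exact this
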